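/- Let α > 0, ω > 0 and β ≠ 0. Then there exist ε₀ > 0 and functions I, θ : (0, ε₀) → ℝ such that for every ε ∈ (0, ε₀): I(ε) > 0, the pair (I(ε), θ(ε)) satisfies the symmetric fixed-point equations (S) with β sin θ(ε) > 0, and I(ε)/ε² → 4β²ω^{−4} as ε → 0⁺. (This is the focus fixed point O_ε near the origin, with expansion I₁ = 4ε²β²ω^{−4} + ⋯.) -/

import Mathlib

open Filter Topology

private theorem aux_mono (α ω ε a b : ℝ) (hω : 0 < ω) (ha : 0 ≤ a) (hab : a ≤ b)
    (hb' : b ≤ ω ^ 2 / 6) :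
    α ^ 2 * ε ^ 2 * a + a * (a - ω ^ 2 / 2) ^ 2 ≤
      α ^ 2 * ε ^ 2 * b + b * (b - ω ^ 2 / 2) ^ 2 := by
  have h1 : ω ^ 2 / 6 ≤ ω ^ 2 / 2 - a - b := by linarith
  have h2 : a * b ≤ (ω ^ 2 / 6) ^ 2 := by nlinarith
  have h3 : (ω ^ 2 / 6) ^ 2 ≤ (ω ^ 2 / 2 - a - b) ^ 2 := by nlinarith
  nlinarith [mul_nonneg (sub_nonneg.2 hab) (sub_nonneg.2 (h2.trans h3)),
    mul_nonneg (mul_nonneg (sq_nonneg α) (sq_nonneg ε)) (sub_nonneg.2 hab)]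

private theorem aux_gdelta (α ω β ε : ℝ) (hω : 0 < ω)
    (hεsq : ε ^ 2 * (9 * (β ^ 2 + 1)) < ω ^ 2 / 6 * ω ^ 4) :
    0 < α ^ 2 * ε ^ 2 * (ω ^ 2 / 6) + ω ^ 2 / 6 * (ω ^ 2 / 6 - ω ^ 2 / 2) ^ 2 - β ^ 2 * ε ^ 2 := by
  nlinarith [mul_nonneg (mul_nonneg (sq_nonneg α) (sq_nonneg ε))
    (by positivity : (0:ℝ) ≤ ω ^ 2 / 6), sq_nonneg ε]

private theorem aux_lower (α ω β L η' ε a : ℝ)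
    (hε : 0 < ε) (hε1 : ε ≤ 1) (hL : 0 < L)
    (hapos : 0 < a) (haL : a ≤ L)
    (haω : a * ω ^ 4 / 4 - β ^ 2 = -(η' * ω ^ 4 / 4))
    (hεK1 : ε ^ 2 * (α ^ 2 * L + L ^ 3) < η' * ω ^ 4 / 4) :
    α ^ 2 * a * ε ^ 2 + a * (a * ε ^ 2 - ω ^ 2 / 2) ^ 2 - β ^ 2 < 0 := by
  have hε4 : ε ^ 4 ≤ ε ^ 2 := pow_le_pow_of_le_one hε.le hε1 (by norm_num)
  have h3 : a ^ 3 ≤ L ^ 3 := pow_le_pow_left₀ hapos.le haL 3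
  have key1 : a ^ 3 * ε ^ 4 ≤ L ^ 3 * ε ^ 2 :=
    mul_le_mul h3 hε4 (by positivity) (pow_pos hL 3).le
  have key2 : α ^ 2 * a * ε ^ 2 ≤ α ^ 2 * L * ε ^ 2 := by gcongr
  have key3 : 0 ≤ a ^ 2 * ω ^ 2 * ε ^ 2 := by positivity
  nlinarith [key1, key2, key3, haω, hεK1]

private theorem aux_upper (α ω β L η' ε b : ℝ)
    (hbpos : 0 < b) (hbL : b ≤ 2 * L) (hL : 0 < L)
    (hbω : b * ω ^ 4 / 4 - β ^ 2 = η' * ω ^ 4 / 4)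
    (hεK2 : ε ^ 2 * (4 * L ^ 2 * ω ^ 2) < η' * ω ^ 4 / 4) :
    0 < α ^ 2 * b * ε ^ 2 + b * (b * ε ^ 2 - ω ^ 2 / 2) ^ 2 - β ^ 2 := by
  have key1 : 0 ≤ α ^ 2 * b * ε ^ 2 := by positivity
  have key2 : 0 ≤ b ^ 3 * ε ^ 4 := by positivity
  have hb2 : b ^ 2 ≤ 4 * L ^ 2 := by nlinarith
  have key3 : b ^ 2 * (ω ^ 2 * ε ^ 2) ≤ 4 * L ^ 2 * (ω ^ 2 * ε ^ 2) :=
    mul_le_mul_of_nonneg_right hb2 (by positivity)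
  nlinarith [key1, key2, key3, hbω, hεK2]

set_option maxHeartbeats 1000000 in
/-- Existence of the focus fixed point `O_ε` near the origin, with expansion
`I₁ = 4ε²β²ω⁻⁴ + ⋯`. -/
theorem focus_Oeps_exists
    (α ω β : ℝ) (hα : 0 < α) (hω : 0 < ω) (hβ : β ≠ 0) :
    ∃ (ε₀ : ℝ) (_ : 0 < ε₀) (I θ : ℝ → ℝ),
      (∀ ε ∈ Set.Ioo (0 : ℝ) ε₀,
        0 < I ε ∧
        β * Real.cos (θ ε) = -(α * Real.sqrt (I ε)) ∧
        ε * β * Real.sin (θ ε) = -(Real.sqrt (I ε) * (I ε - ω ^ 2 / 2)) ∧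
        0 < β * Real.sin (θ ε)) ∧
      Tendsto (fun ε => I ε / ε ^ 2) (𝓝[>] 0) (𝓝 (4 * β ^ 2 / ω ^ 4)) := by
  have hω2 : 0 < ω ^ 2 := by positivity
  have hβ2 : 0 < β ^ 2 := by positivity
  obtain ⟨g, hgdef⟩ : ∃ g : ℝ → ℝ → ℝ,
      g = fun ε I => α ^ 2 * ε ^ 2 * I + I * (I - ω ^ 2 / 2) ^ 2 - β ^ 2 * ε ^ 2 := ⟨_, rfl⟩
  have hgapp : ∀ ε I, g ε I = α ^ 2 * ε ^ 2 * I + I * (I - ω ^ 2 / 2) ^ 2 - β ^ 2 * ε ^ 2 := by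
    intro ε I; rw [hgdef]
  -- monotonicity of g ε on [0, ω²/6]
  have mono : ∀ ε a b : ℝ, 0 ≤ a → a ≤ b → b ≤ ω ^ 2 / 6 → g ε a ≤ g ε b := by
    intro ε a b ha hab hb
    rw [hgapp, hgapp]
    have := aux_mono α ω ε a b hω ha hab hb
    linarith
  obtain ⟨ε₀, hε₀def⟩ : ∃ x : ℝ, x = Real.sqrt (ω ^ 2 / 6 * ω ^ 4 / (9 * (β ^ 2 + 1))) := ⟨_, rfl⟩
  have hε₀pos : 0 < ε₀ := by rw [hε₀def]; positivity
  -- existence of a root of g in (0, ω²/6)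
  have hroot : ∀ ε : ℝ, ∃ I, ε ∈ Set.Ioo 0 ε₀ → (0 < I ∧ I < ω ^ 2 / 6 ∧ g ε I = 0) := by
    intro ε
    by_cases hε : ε ∈ Set.Ioo 0 ε₀
    · have hεpos : 0 < ε := hε.1
      have hεlt : ε < ε₀ := hε.2
      rw [hε₀def] at hεlt
      have hεsq : ε ^ 2 < ω ^ 2 / 6 * ω ^ 4 / (9 * (β ^ 2 + 1)) :=
        (Real.lt_sqrt hεpos.le).1 hεlt
      have hεsq' : ε ^ 2 * (9 * (β ^ 2 + 1)) < ω ^ 2 / 6 * ω ^ 4 := by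
        rw [lt_div_iff₀ (by positivity : (0:ℝ) < 9 * (β ^ 2 + 1))] at hεsq
        exact hεsq
      have h0 : g ε 0 < 0 := by
        rw [hgapp]
        have : 0 < β ^ 2 * ε ^ 2 := by positivity
        linarith [this]
      have hδ' : 0 < g ε (ω ^ 2 / 6) := by
        rw [hgapp]
        exact aux_gdelta α ω β ε hω hεsq'
      have hcont : ContinuousOn (g ε) (Set.Icc 0 (ω ^ 2 / 6)) := by
        rw [hgdef]; fun_prop
      obtain ⟨I, hIin, hgI⟩ :=
        intermediate_value_Ioo (by positivity : (0:ℝ) ≤ ω ^ 2 / 6) hcont ⟨h0, hδ'⟩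
      exact ⟨I, fun _ => ⟨hIin.1, hIin.2, hgI⟩⟩
    · exact ⟨0, fun h => absurd h hε⟩
  choose Ifun hIfun using hroot
  refine ⟨ε₀, hε₀pos, Ifun,
    fun ε => Complex.arg ⟨-(α * Real.sqrt (Ifun ε)) / β,
      -(Real.sqrt (Ifun ε) * (Ifun ε - ω ^ 2 / 2)) / (ε * β)⟩, ?_, ?_⟩
  · -- fixed point equations
    intro ε hε
    dsimp only
    obtain ⟨hIpos, hIδ, hgI⟩ := hIfun ε hε
    have hεpos : 0 < ε := hε.1
    have hεβ : ε * β ≠ 0 := mul_ne_zero hεpos.ne' hβ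
    obtain ⟨J, hJdef⟩ : ∃ x : ℝ, x = Ifun ε := ⟨_, rfl⟩
    rw [← hJdef] at hIpos hIδ hgI ⊢
    obtain ⟨S, hSdef⟩ : ∃ x : ℝ, x = Real.sqrt J := ⟨_, rfl⟩
    rw [← hSdef]
    have hsq : S ^ 2 = J := by rw [hSdef]; exact Real.sq_sqrt hIpos.le
    have hsqpos : 0 < S := by rw [hSdef]; exact Real.sqrt_pos.2 hIpos
    have key : α ^ 2 * ε ^ 2 * J + J * (J - ω ^ 2 / 2) ^ 2 = β ^ 2 * ε ^ 2 := by
      rw [hgapp] at hgI; linarith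
    obtain ⟨z, hzdef⟩ : ∃ x : ℂ,
        x = (⟨-(α * S) / β, -(S * (J - ω ^ 2 / 2)) / (ε * β)⟩ : ℂ) := ⟨_, rfl⟩
    rw [← hzdef]
    have hns : Complex.normSq z = 1 := by
      rw [hzdef, Complex.normSq_mk]
      have hc2 : -(α * S) / β * (-(α * S) / β) = α ^ 2 * ε ^ 2 * J / (ε ^ 2 * β ^ 2) := by
        rw [← hsq]; field_simp
      have hs2 : -(S * (J - ω ^ 2 / 2)) / (ε * β) * (-(S * (J - ω ^ 2 / 2)) / (ε * β))
          = J * (J - ω ^ 2 / 2) ^ 2 / (ε ^ 2 * β ^ 2) := by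
        rw [← hsq]; field_simp
      rw [hc2, hs2, ← add_div, key]
      field_simp
    have habs : ‖z‖ = 1 := by
      have h2 : ‖z‖ ^ 2 = 1 := by rw [Complex.sq_norm, hns]
      have h3 : ‖z‖ = Real.sqrt 1 := by
        rw [← h2, Real.sqrt_sq (norm_nonneg z)]
      simpa using h3
    have hzne : z ≠ 0 := by
      intro h; rw [h] at habs; simp at habs
    have hre : z.re = -(α * S) / β := by rw [hzdef]
    have him : z.im = -(S * (J - ω ^ 2 / 2)) / (ε * β) := by rw [hzdef]
    have hcos : Real.cos z.arg = -(α * S) / β := by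
      rw [Complex.cos_arg hzne, habs, div_one, hre]
    have hsin : Real.sin z.arg = -(S * (J - ω ^ 2 / 2)) / (ε * β) := by
      rw [Complex.sin_arg, habs, div_one, him]
    have hJlt : J < ω ^ 2 / 2 := by nlinarith
    refine ⟨hIpos, ?_, ?_, ?_⟩
    · rw [hcos]; field_simp
    · rw [hsin]; field_simp
    · rw [hsin]
      have hpos : 0 < S * (ω ^ 2 / 2 - J) / ε :=
        div_pos (mul_pos hsqpos (by linarith)) hεpos
      have heq : β * (-(S * (J - ω ^ 2 / 2)) / (ε * β)) =
          S * (ω ^ 2 / 2 - J) / ε := by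
        field_simp; ring
      rw [heq]; exact hpos
  · -- the asymptotics
    obtain ⟨L, hLdef⟩ : ∃ x : ℝ, x = 4 * β ^ 2 / ω ^ 4 := ⟨_, rfl⟩
    have hLpos : 0 < L := by rw [hLdef]; positivity
    have hLω : L * ω ^ 4 = 4 * β ^ 2 := by rw [hLdef]; field_simp
    rw [← hLdef, Metric.tendsto_nhds]
    intro η hη
    obtain ⟨η', hη'def⟩ : ∃ x : ℝ, x = min (η / 2) (L / 2) := ⟨_, rfl⟩
    have hη'pos : 0 < η' := by rw [hη'def]; exact lt_min (by linarith) (by linarith)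
    have hη'η : η' ≤ η / 2 := hη'def ▸ min_le_left _ _
    have hη'L : η' ≤ L / 2 := hη'def ▸ min_le_right _ _
    have hc1 : 0 < α ^ 2 * L + L ^ 3 + 1 := by
      nlinarith [mul_nonneg (sq_nonneg α) hLpos.le, pow_pos hLpos 3]
    have hc2 : 0 < 4 * L ^ 2 * ω ^ 2 + 1 := by
      nlinarith [mul_pos (mul_pos (by norm_num : (0:ℝ) < 4) (pow_pos hLpos 2)) hω2]
    have hc3 : 0 < L + 1 := by linarith
    obtain ⟨m, hmdef⟩ : ∃ x : ℝ, x = min (η' * ω ^ 4 / (4 * (α ^ 2 * L + L ^ 3 + 1)))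
        (min (η' * ω ^ 4 / (4 * (4 * L ^ 2 * ω ^ 2 + 1))) ((ω ^ 2 / 6) / (L + 1))) := ⟨_, rfl⟩
    have hmpos : 0 < m := by
      rw [hmdef]
      refine lt_min (by positivity) (lt_min (by positivity) (by positivity))
    have hR : 0 < min ε₀ (min 1 (Real.sqrt m)) := by
      refine lt_min hε₀pos (lt_min one_pos (Real.sqrt_pos.2 hmpos))
    filter_upwards [Ioo_mem_nhdsGT_of_mem
      (Set.mem_Ico.2 ⟨le_refl (0:ℝ), hR⟩)] with ε hε
    have hεpos : 0 < ε := hε.1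
    have hεε₀ : ε < ε₀ := hε.2.trans_le (min_le_left _ _)
    have hε1 : ε ≤ 1 :=
      ((hε.2.trans_le (min_le_right _ _)).trans_le (min_le_left _ _)).le
    have hεm : ε ^ 2 < m := by
      have h := (hε.2.trans_le (min_le_right _ _)).trans_le (min_le_right _ _)
      exact (Real.lt_sqrt hεpos.le).1 h
    have hεm1 : ε ^ 2 < η' * ω ^ 4 / (4 * (α ^ 2 * L + L ^ 3 + 1)) := by
      rw [hmdef] at hεm; exact hεm.trans_le (min_le_left _ _)
    have hεm2 : ε ^ 2 < η' * ω ^ 4 / (4 * (4 * L ^ 2 * ω ^ 2 + 1)) := by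
      rw [hmdef] at hεm; exact hεm.trans_le ((min_le_right _ _).trans (min_le_left _ _))
    have hεm3 : ε ^ 2 < (ω ^ 2 / 6) / (L + 1) := by
      rw [hmdef] at hεm; exact hεm.trans_le ((min_le_right _ _).trans (min_le_right _ _))
    have h4a : ε ^ 2 * (4 * (α ^ 2 * L + L ^ 3 + 1)) < η' * ω ^ 4 := by
      have h := mul_lt_mul_of_pos_right hεm1 (by linarith : (0:ℝ) < 4 * (α ^ 2 * L + L ^ 3 + 1))
      rwa [div_mul_cancel₀ _ (by linarith : (4 * (α ^ 2 * L + L ^ 3 + 1) : ℝ) ≠ 0)] at h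
    have hεK1 : ε ^ 2 * (α ^ 2 * L + L ^ 3) < η' * ω ^ 4 / 4 := by
      nlinarith [sq_nonneg ε]
    have h4b : ε ^ 2 * (4 * (4 * L ^ 2 * ω ^ 2 + 1)) < η' * ω ^ 4 := by
      have h := mul_lt_mul_of_pos_right hεm2 (by linarith : (0:ℝ) < 4 * (4 * L ^ 2 * ω ^ 2 + 1))
      rwa [div_mul_cancel₀ _ (by linarith : (4 * (4 * L ^ 2 * ω ^ 2 + 1) : ℝ) ≠ 0)] at h
    have hεK2 : ε ^ 2 * (4 * L ^ 2 * ω ^ 2) < η' * ω ^ 4 / 4 := by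
      nlinarith [sq_nonneg ε]
    have hεδ : ε ^ 2 * (L + 1) < ω ^ 2 / 6 := by
      have h := mul_lt_mul_of_pos_right hεm3 hc3
      rwa [div_mul_cancel₀ _ hc3.ne'] at h
    obtain ⟨hIpos, hIδ, hgI⟩ := hIfun ε ⟨hεpos, hεε₀⟩
    have hε2pos : 0 < ε ^ 2 := by positivity
    have haω : (L - η') * ω ^ 4 / 4 - β ^ 2 = -(η' * ω ^ 4 / 4) := by
      linear_combination hLω / 4
    have hbω : (L + η') * ω ^ 4 / 4 - β ^ 2 = η' * ω ^ 4 / 4 := by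
      linear_combination hLω / 4
    have hga : g ε ((L - η') * ε ^ 2) < 0 := by
      have hkey := aux_lower α ω β L η' ε (L - η') hεpos hε1 hLpos
        (by linarith) (by linarith) haω hεK1
      have heq : g ε ((L - η') * ε ^ 2) =
          ε ^ 2 * (α ^ 2 * (L - η') * ε ^ 2 + (L - η') * ((L - η') * ε ^ 2 - ω ^ 2 / 2) ^ 2
            - β ^ 2) := by
        rw [hgapp]; ring
      rw [heq]
      exact mul_neg_of_pos_of_neg hε2pos hkey
    have hgb : 0 < g ε ((L + η') * ε ^ 2) := by
      have hkey := aux_upper α ω β L η' ε (L + η') (by linarith) (by linarith) hLpos hbω hεK2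
      have heq : g ε ((L + η') * ε ^ 2) =
          ε ^ 2 * (α ^ 2 * (L + η') * ε ^ 2 + (L + η') * ((L + η') * ε ^ 2 - ω ^ 2 / 2) ^ 2
            - β ^ 2) := by
        rw [hgapp]; ring
      rw [heq]
      exact mul_pos hε2pos hkey
    -- lower bound on Ifun ε
    have hlow : (L - η') * ε ^ 2 < Ifun ε := by
      by_contra h
      push_neg at h
      have haδ : (L - η') * ε ^ 2 ≤ ω ^ 2 / 6 := by
        have h1 : (L - η') * ε ^ 2 ≤ (L + 1) * ε ^ 2 := by
          have := mul_nonneg hη'pos.le hε2pos.le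
          nlinarith [hε2pos.le]
        nlinarith [hεδ]
      have := mono ε (Ifun ε) ((L - η') * ε ^ 2) hIpos.le h haδ
      rw [hgI] at this
      linarith
    -- upper bound on Ifun ε
    have hup : Ifun ε < (L + η') * ε ^ 2 := by
      by_contra h
      push_neg at h
      have hbnn : 0 ≤ (L + η') * ε ^ 2 :=
        mul_nonneg (by linarith) hε2pos.le
      have := mono ε ((L + η') * ε ^ 2) (Ifun ε) hbnn h hIδ.le
      rw [hgI] at this
      linarith
    -- conclude
    rw [Real.dist_eq, abs_lt]
    constructor
    · have h1 : L - η' < Ifun ε / ε ^ 2 := by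
        rw [lt_div_iff₀ hε2pos]; exact hlow
      linarith
    · have h1 : Ifun ε / ε ^ 2 < L + η' := by
        rw [div_lt_iff₀ hε2pos]; exact hup
      linarith
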